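/- arXiv:1801.10336 — 2 statements merged into one kernel-verified Lean document; each statement's English description precedes it below -/
import Mathlib

section
/- Let a : ℝ → ℝ be continuous and bounded on [0,∞) satisfying a stable-type exponential dichotomy (exp(∫_τ^t a) ≤ C e^{−λ(t−τ)} for 0 ≤ τ ≤ t). Define S(t,u) = s²(t)·u² where s²(t) = ∫_t^∞ exp(2∫_t^v a) dv. Then there exist constants 0 < c₁ ≤ c₂ such that c₁·u² ≤ S(t,u) ≤ c₂·u² for all t ≥ 0 and u ∈ ℝ; specifically one may take c₁ = 1/(2a₀) with a₀ = sup|a| and c₂ = C²/(2λ). -/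
open Real MeasureTheory intervalIntegral Set

private lemma expDecay_int (t b : ℝ) (hb : 0 < b) :
    IntegrableOn (fun v => Real.exp (-b * (v - t))) (Ioi t) := by
  have h : IntegrableOn (fun v => Real.exp (b * t) * Real.exp (-b * v)) (Ioi t) :=
    (exp_neg_integrableOn_Ioi t hb).const_mul (Real.exp (b * t))
  refine IntegrableOn.congr_fun h (fun v _ => ?_) measurableSet_Ioi
  rw [← Real.exp_add]; ring_nf

private lemma expDecay_eq (t b : ℝ) (hb : 0 < b) :
    ∫ v in Ioi t, Real.exp (-b * (v - t)) = 1 / b := by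
  have hderiv : ∀ v ∈ Ioi t,
      HasDerivAt (fun v => -(Real.exp (-b * (v - t)) / b)) (Real.exp (-b * (v - t))) v := by
    intro v _
    have h1 : HasDerivAt (fun v : ℝ => -b * (v - t)) (-b) v := by
      simpa using (((hasDerivAt_id v).sub_const t).const_mul (-b))
    have h2 := (h1.exp.div_const b).neg
    have e : -(Real.exp (-b * (v - t)) * -b / b) = Real.exp (-b * (v - t)) := by
      rw [mul_neg, neg_div, neg_neg, mul_div_assoc, div_self hb.ne', mul_one]
    rw [e] at h2
    exact h2
  have htend : Filter.Tendsto (fun v => -(Real.exp (-b * (v - t)) / b)) Filter.atTop (nhds 0) := by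
    have h0 : Filter.Tendsto (fun v : ℝ => -b * (v - t)) Filter.atTop Filter.atBot :=
      Filter.Tendsto.const_mul_atTop_of_neg (neg_neg_iff_pos.mpr hb)
        (Filter.tendsto_atTop_add_const_right _ (-t) Filter.tendsto_id)
    have := ((Real.tendsto_exp_atBot.comp h0).div_const b).neg
    simpa using this
  have hcontw : ContinuousWithinAt (fun v => -(Real.exp (-b * (v - t)) / b)) (Ici t) t := by
    apply Continuous.continuousWithinAt; fun_prop
  have := MeasureTheory.integral_Ioi_of_hasDerivAt_of_tendsto hcontw hderiv
    (expDecay_int t b hb) htend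
  rw [this]; simp

/-- two-sided estimate `c₁ u² ≤ S(t,u) ≤ c₂ u²` for the quadratic
Lyapunov function `S(t,u) = s²(t) u²`, with `c₁ = 1/(2a₀)` and `c₂ = C²/(2λ)`. -/
theorem stmt2 (a : ℝ → ℝ) (C lam a₀ : ℝ) (hC : 0 < C) (hlam : 0 < lam) (ha₀ : 0 < a₀)
    (hcont : ContinuousOn a (Set.Ici 0))
    (hbound : ∀ t : ℝ, 0 ≤ t → |a t| ≤ a₀)
    (hdich : ∀ τ t : ℝ, 0 ≤ τ → τ ≤ t →
      Real.exp (∫ s in τ..t, a s) ≤ C * Real.exp (-lam * (t - τ)))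
    (S : ℝ → ℝ → ℝ)
    (hS : ∀ t u : ℝ, S t u = (∫ v in Set.Ici t, Real.exp (2 * ∫ w in t..v, a w)) * u ^ 2) :
    ∃ c₁ c₂ : ℝ, c₁ = 1 / (2 * a₀) ∧ c₂ = C ^ 2 / (2 * lam) ∧ 0 < c₁ ∧ c₁ ≤ c₂ ∧
      ∀ t u : ℝ, 0 ≤ t → c₁ * u ^ 2 ≤ S t u ∧ S t u ≤ c₂ * u ^ 2 := by
  have key : ∀ t : ℝ, 0 ≤ t →
      1 / (2 * a₀) ≤ (∫ v in Set.Ici t, Real.exp (2 * ∫ w in t..v, a w)) ∧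
      (∫ v in Set.Ici t, Real.exp (2 * ∫ w in t..v, a w)) ≤ C ^ 2 / (2 * lam) := by
    intro t ht
    set g : ℝ → ℝ := fun v => Real.exp (2 * ∫ w in t..v, a w) with hg
    have haint : ∀ v : ℝ, t ≤ v → IntervalIntegrable a volume t v := by
      intro v hv
      apply ContinuousOn.intervalIntegrable
      apply hcont.mono
      rw [uIcc_of_le hv]
      exact fun x hx => le_trans ht hx.1
    have hFcont : ContinuousOn (fun v => ∫ w in t..v, a w) (Ici t) := by
      intro v hv
      have hv' : t ≤ v := hv
      have h1 : ContinuousWithinAt (fun v => ∫ w in t..v, a w) (Icc t (v + 1)) v := by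
        apply intervalIntegral.continuousWithinAt_primitive (measure_singleton v)
        rw [min_self, max_eq_right (by linarith)]
        exact haint (v + 1) (by linarith)
      apply h1.mono_of_mem_nhdsWithin
      rw [mem_nhdsWithin]
      exact ⟨Iio (v + 1), isOpen_Iio, by simp, fun x hx => ⟨hx.2, hx.1.le⟩⟩
    have hgcont : ContinuousOn g (Ici t) :=
      Real.continuous_exp.comp_continuousOn (continuousOn_const.mul hFcont)
    have hmeas : AEStronglyMeasurable g (volume.restrict (Ioi t)) :=
      (hgcont.mono Ioi_subset_Ici_self).aestronglyMeasurable measurableSet_Ioi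
    have hub : ∀ v, t ≤ v → g v ≤ C ^ 2 * Real.exp (-(2 * lam) * (v - t)) := by
      intro v hv
      have h := hdich t v ht hv
      have hgv : g v = Real.exp (∫ w in t..v, a w) ^ 2 := by
        rw [hg]; simp only; rw [two_mul, Real.exp_add, sq]
      rw [hgv]
      calc Real.exp (∫ w in t..v, a w) ^ 2
          ≤ (C * Real.exp (-lam * (v - t))) ^ 2 :=
            pow_le_pow_left₀ (Real.exp_nonneg _) h 2
        _ = C ^ 2 * Real.exp (-(2 * lam) * (v - t)) := by
            rw [mul_pow, sq (Real.exp _), ← Real.exp_add]; ring_nf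
    have hlb : ∀ v, t ≤ v → Real.exp (-(2 * a₀) * (v - t)) ≤ g v := by
      intro v hv
      have hI : (v - t) • (-a₀) ≤ ∫ w in t..v, a w := by
        have hmono := intervalIntegral.integral_mono_on hv
          (_root_.intervalIntegrable_const (c := -a₀)) (haint v hv)
          (fun x hx => (abs_le.mp (hbound x (le_trans ht hx.1))).1)
        simpa using hmono
      rw [hg]; simp only
      apply Real.exp_le_exp.mpr
      have : (v - t) • (-a₀) = -(a₀ * (v - t)) := by simp [smul_eq_mul]; ring
      nlinarith [hI]
    have hgint : IntegrableOn g (Ioi t) := by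
      apply Integrable.mono' ((expDecay_int t (2 * lam) (by positivity)).const_mul (C ^ 2)) hmeas
      filter_upwards [ae_restrict_mem measurableSet_Ioi] with v hv
      rw [Real.norm_eq_abs, abs_of_nonneg (Real.exp_pos _).le]
      exact hub v hv.le
    have h1 : ∫ v in Ioi t, Real.exp (-(2 * a₀) * (v - t)) ≤ ∫ v in Ioi t, g v :=
      setIntegral_mono_on (expDecay_int t (2 * a₀) (by positivity)) hgint measurableSet_Ioi
        (fun v hv => hlb v hv.le)
    have h2 : ∫ v in Ioi t, g v ≤ ∫ v in Ioi t, C ^ 2 * Real.exp (-(2 * lam) * (v - t)) :=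
      setIntegral_mono_on hgint
        ((expDecay_int t (2 * lam) (by positivity)).const_mul (C ^ 2)) measurableSet_Ioi
        (fun v hv => hub v hv.le)
    rw [expDecay_eq t (2 * a₀) (by positivity)] at h1
    rw [MeasureTheory.integral_const_mul, expDecay_eq t (2 * lam) (by positivity)] at h2
    rw [MeasureTheory.integral_Ici_eq_integral_Ioi]
    constructor
    · exact h1
    · calc (∫ v in Ioi t, g v) ≤ C ^ 2 * (1 / (2 * lam)) := h2
        _ = C ^ 2 / (2 * lam) := by ring
  refine ⟨1 / (2 * a₀), C ^ 2 / (2 * lam), rfl, rfl, by positivity, ?_, ?_⟩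
  · have h := key 0 le_rfl; linarith [h.1, h.2]
  · intro t u ht
    rw [hS]
    exact ⟨mul_le_mul_of_nonneg_right (key t ht).1 (sq_nonneg u),
      mul_le_mul_of_nonneg_right (key t ht).2 (sq_nonneg u)⟩
end

section
/- Let u(t) solve the scalar linear ODE u' = a(t)u + h(t,u) with h(t,0) = 0 and |h(t,u)| ≤ n(|u|)·|u| where n is continuous with n(0) = 0, and suppose a satisfies a stable-type exponential dichotomy on ℝ₊. Let S(t,u) = s²(t)u² with s² as above and let σ² = sup_t s²(t). Then there exists δ > 0 such that whenever 0 < |u₀| ≤ δ, the derivative of S along the solution satisfies (d/dt)S(t,u(t))|_{t=t₀} ≤ −u₀²/2 for any t₀ ≥ 0 with u(t₀) = u₀. -/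
open Real MeasureTheory intervalIntegral Set


lemma expIoi_aux (b t : ℝ) (hb : 0 < b) : ∫ v in Ioi t, Real.exp (-(b*(v - t))) = 1/b := by
  have hderiv : ∀ x ∈ Ici t, HasDerivAt (fun v => -(Real.exp (-(b*(v - t)))/b)) (Real.exp (-(b*(x - t)))) x := by
    intro x _
    have h1 : HasDerivAt (fun v : ℝ => -(b*(v - t))) (-b) x := by
      exact (((hasDerivAt_id x).sub_const t).const_mul b).neg.congr_deriv (by simp)
    have := (h1.exp.div_const b).neg
    refine this.congr_deriv ?_
    have hb' : b ≠ 0 := hb.ne'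
    field_simp
  have hint : IntegrableOn (fun v => Real.exp (-(b*(v - t)))) (Ioi t) := by
    have h2 := (exp_neg_integrableOn_Ioi t hb).const_mul (Real.exp (b*t))
    refine (IntegrableOn.congr_fun h2 (fun x hx => ?_) measurableSet_Ioi)
    rw [← Real.exp_add]; ring_nf
  have htend : Filter.Tendsto (fun v => -(Real.exp (-(b*(v - t)))/b)) Filter.atTop (nhds 0) := by
    have h3 : Filter.Tendsto (fun v : ℝ => -(b*(v - t))) Filter.atTop Filter.atBot := by
      apply Filter.tendsto_neg_atBot_iff.mpr
      exact (Filter.tendsto_atTop_atTop_of_monotone (fun x y hxy => by nlinarith)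
        (fun c => ⟨c/b + t, by field_simp; ring_nf; rfl⟩))
    have := (Real.tendsto_exp_atBot.comp h3).div_const b
    simpa using this.neg
  have := MeasureTheory.integral_Ioi_of_hasDerivAt_of_tendsto' hderiv hint htend
  rw [this]; simp


/-- the Lyapunov function `S(t,u) = s²(t)u²` decreases along
solutions of `u' = a(t)u + h(t,u)`: there is `δ > 0` such that for
`0 < |u₀| ≤ δ` the derivative of `t ↦ S(t,u(t))` at `t₀` is `≤ -u₀²/2`. -/
theorem stmt4 (a : ℝ → ℝ) (C lam : ℝ) (hC : 0 < C) (hlam : 0 < lam)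
    (hcont : Continuous a)
    (hdich : ∀ τ t : ℝ, 0 ≤ τ → τ ≤ t →
      Real.exp (∫ s in τ..t, a s) ≤ C * Real.exp (-lam * (t - τ)))
    (s2 : ℝ → ℝ)
    (hs2 : ∀ t : ℝ, s2 t = ∫ v in Set.Ici t, Real.exp (2 * ∫ w in t..v, a w))
    (h : ℝ → ℝ → ℝ) (hhcont : Continuous fun p : ℝ × ℝ => h p.1 p.2)
    (hh0 : ∀ t : ℝ, h t 0 = 0)
    (n : ℝ → ℝ) (hncont : Continuous n) (hn0 : n 0 = 0)
    (hhn : ∀ t x : ℝ, |h t x| ≤ n |x| * |x|)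
    (u : ℝ → ℝ) (hu : ∀ t : ℝ, HasDerivAt u (a t * u t + h t (u t)) t) :
    ∃ δ : ℝ, 0 < δ ∧ ∀ t₀ u₀ : ℝ, 0 ≤ t₀ → u t₀ = u₀ → 0 < |u₀| → |u₀| ≤ δ →
      ∀ D : ℝ, HasDerivAt (fun t => s2 t * (u t) ^ 2) D t₀ → D ≤ -(u₀ ^ 2) / 2 := by
  -- main proof
  set A : ℝ → ℝ := fun t => ∫ s in (0:ℝ)..t, a s with hAdef
  have hA : ∀ t, HasDerivAt A (a t) t := fun t =>
    intervalIntegral.integral_hasDerivAt_right (hcont.intervalIntegrable 0 t)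
      (hcont.stronglyMeasurableAtFilter _ _) hcont.continuousAt
  have hAcont : Continuous A := by
    apply continuous_iff_continuousAt.mpr
    exact fun t => (hA t).continuousAt
  set f : ℝ → ℝ := fun v => Real.exp (2 * A v) with hfdef
  have hfcont : Continuous f := (continuous_const.mul hAcont).rexp
  have hbd : ∀ v : ℝ, 0 ≤ v → f v ≤ C^2 * Real.exp (-(2*lam) * v) := by
    intro v hv
    have h1 := hdich 0 v le_rfl hv
    have h2 : f v = (Real.exp (A v))^2 := by
      rw [hfdef, ← Real.exp_nat_mul]; norm_num
    rw [h2]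
    have h3 : (Real.exp (A v))^2 ≤ (C * Real.exp (-lam * (v - 0)))^2 := by
      apply pow_le_pow_left₀ (Real.exp_nonneg _) _ 2
      simpa [hAdef] using h1
    calc (Real.exp (A v))^2 ≤ (C * Real.exp (-lam * (v - 0)))^2 := h3
      _ = C^2 * Real.exp (-(2*lam) * v) := by
          rw [mul_pow, ← Real.exp_nat_mul]; ring_nf
  have hf_int : ∀ t : ℝ, IntegrableOn f (Ici t) := by
    intro t
    have h1 : IntegrableOn f (Ioi 0) := by
      refine Integrable.mono' (((exp_neg_integrableOn_Ioi 0 (by positivity : (0:ℝ) < 2*lam))).const_mul (C^2)) (hfcont.aestronglyMeasurable.restrict) ?_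
      filter_upwards [ae_restrict_mem measurableSet_Ioi] with x hx
      rw [Real.norm_eq_abs, abs_of_pos (Real.exp_pos _)]
      exact hbd x (le_of_lt hx)
    have h2 : IntegrableOn f (Icc t 0) := hfcont.continuousOn.integrableOn_Icc
    refine (h2.union h1).mono_set ?_
    intro x hx
    rcases le_or_gt x 0 with hx0 | hx0
    · exact Or.inl ⟨hx, hx0⟩
    · exact Or.inr hx0
  have hsplit : ∀ t : ℝ, ∫ v in Ici t, f v = (∫ v in Ici 0, f v) - ∫ v in (0:ℝ)..t, f v := by
    intro t
    rcases le_or_gt 0 t with ht | ht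
    · have hun : Ico 0 t ∪ Ici t = Ici 0 := Ico_union_Ici_eq_Ici ht
      have hd : Disjoint (Ico 0 t) (Ici t) := (Iio_disjoint_Ici le_rfl).mono_left Ico_subset_Iio_self
      have := setIntegral_union hd measurableSet_Ici ((hf_int 0).mono_set (by rw [← hun]; exact subset_union_left)) (hf_int t)
      rw [hun] at this
      rw [intervalIntegral.integral_of_le ht, integral_Ioc_eq_integral_Ioo, ← integral_Ico_eq_integral_Ioo]
      linarith
    · have hun : Ico t 0 ∪ Ici 0 = Ici t := Ico_union_Ici_eq_Ici ht.le
      have hd : Disjoint (Ico t 0) (Ici 0) := (Iio_disjoint_Ici le_rfl).mono_left Ico_subset_Iio_self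
      have := setIntegral_union hd measurableSet_Ici ((hf_int t).mono_set (by rw [← hun]; exact subset_union_left)) (hf_int 0)
      rw [hun] at this
      rw [intervalIntegral.integral_symm, intervalIntegral.integral_of_le ht.le, integral_Ioc_eq_integral_Ioo, ← integral_Ico_eq_integral_Ioo]
      linarith
  have hs2eq : ∀ t : ℝ, s2 t = Real.exp (-(2 * A t)) * ((∫ v in Ici 0, f v) - ∫ v in (0:ℝ)..t, f v) := by
    intro t
    rw [hs2 t, ← hsplit t, ← MeasureTheory.integral_const_mul]
    refine setIntegral_congr_fun measurableSet_Ici (fun v hv => ?_)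
    rw [hfdef]
    simp only
    rw [← Real.exp_add]
    congr 1
    have hsub : ∫ w in t..v, a w = A v - A t := by
      have := intervalIntegral.integral_interval_sub_left (μ := volume) (hcont.intervalIntegrable 0 v) (hcont.intervalIntegrable 0 t)
      rw [← this]
    rw [hsub]; ring
  have hs2deriv : ∀ t : ℝ, HasDerivAt s2 (-(2 * a t) * s2 t - 1) t := by
    intro t
    have hF : HasDerivAt (fun r => ∫ v in (0:ℝ)..r, f v) (f t) t :=
      intervalIntegral.integral_hasDerivAt_right (hfcont.intervalIntegrable 0 t)
        (hfcont.stronglyMeasurableAtFilter _ _) hfcont.continuousAt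
    have hE : HasDerivAt (fun r => Real.exp (-(2 * A r))) (-(2 * a t) * Real.exp (-(2 * A t))) t := by
      have := (((hA t).const_mul 2).neg).exp
      simpa [mul_comm] using this
    have hprod := hE.mul ((hasDerivAt_const t (∫ v in Ici 0, f v)).sub hF)
    have heq : s2 =ᶠ[nhds t] (fun r => Real.exp (-(2 * A r)) * ((∫ v in Ici 0, f v) - ∫ v in (0:ℝ)..r, f v)) :=
      Filter.Eventually.of_forall hs2eq
    have hres := hprod.congr_of_eventuallyEq heq
    refine hres.congr_deriv ?_
    simp only [Pi.sub_apply]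
    have hone : Real.exp (-(2 * A t)) * f t = 1 := by
      rw [hfdef]; simp only
      rw [← Real.exp_add]; simp
    rw [hs2eq t]
    nlinarith [hone]
  -- nonnegativity of s2
  have hs2nonneg : ∀ t : ℝ, 0 ≤ s2 t := by
    intro t
    rw [hs2 t]
    exact setIntegral_nonneg measurableSet_Ici (fun v _ => (Real.exp_pos _).le)
  -- bound for s2 on Ici 0
  set M : ℝ := C^2 / (2*lam) with hMdef
  have hM : 0 < M := by positivity
  have hs2bd : ∀ t : ℝ, 0 ≤ t → s2 t ≤ M := by
    intro t ht
    rw [hs2 t, integral_Ici_eq_integral_Ioi]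
    have hsub : ∀ v : ℝ, ∫ w in t..v, a w = A v - A t := by
      intro v
      have := intervalIntegral.integral_interval_sub_left (μ := volume) (hcont.intervalIntegrable 0 v) (hcont.intervalIntegrable 0 t)
      rw [← this]
    have hint0 : IntegrableOn (fun x => Real.exp (-(2 * A t)) * f x) (Ici t) :=
      (hf_int t).const_mul _
    have hintL : IntegrableOn (fun v => Real.exp (2 * ∫ w in t..v, a w)) (Ioi t) := by
      refine (hint0.mono_set Ioi_subset_Ici_self).congr_fun (fun v hv => ?_) measurableSet_Ioi
      rw [hfdef]
      simp only
      rw [← Real.exp_add, hsub v]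
      congr 1
      ring
    have hintR : IntegrableOn (fun v => C^2 * Real.exp (-(2*lam)*(v - t))) (Ioi t) := by
      have h2 := ((exp_neg_integrableOn_Ioi t (by positivity : (0:ℝ) < 2*lam)).const_mul (Real.exp ((2*lam)*t))).const_mul (C^2)
      refine (IntegrableOn.congr_fun h2 (fun x hx => ?_) measurableSet_Ioi)
      rw [← Real.exp_add]; ring_nf
    have hmono := setIntegral_mono_on hintL hintR measurableSet_Ioi ?_
    · calc ∫ v in Ioi t, Real.exp (2 * ∫ w in t..v, a w) ≤ ∫ v in Ioi t, C^2 * Real.exp (-(2*lam)*(v - t)) := hmono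
        _ = C^2 * ∫ v in Ioi t, Real.exp (-((2*lam)*(v - t))) := by
            rw [← MeasureTheory.integral_const_mul]
            congr 1 with v
            ring_nf
        _ = C^2 * (1/(2*lam)) := by rw [expIoi_aux (2*lam) t (by positivity)]
        _ = M := by rw [hMdef]; ring
    · intro v hv
      have h1 := hdich t v ht (le_of_lt hv)
      have h2 : Real.exp (2 * ∫ w in t..v, a w) = (Real.exp (∫ w in t..v, a w))^2 := by
        rw [← Real.exp_nat_mul]; norm_num
      rw [h2]
      calc (Real.exp (∫ w in t..v, a w))^2 ≤ (C * Real.exp (-lam * (v - t)))^2 :=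
            pow_le_pow_left₀ (Real.exp_nonneg _) h1 2
        _ = C^2 * Real.exp (-(2*lam)*(v - t)) := by
            rw [mul_pow, ← Real.exp_nat_mul]; ring_nf
  -- choose δ via continuity of n at 0
  obtain ⟨δ₀, hδ₀pos, hδ₀⟩ := Metric.continuousAt_iff.mp (hncont.continuousAt (x := 0)) (1/(4*M)) (by positivity)
  refine ⟨δ₀/2, by positivity, ?_⟩
  intro t₀ u₀ ht₀ hut₀ hu₀pos hu₀le D hD
  -- compute the derivative
  have hSderiv : HasDerivAt (fun t => s2 t * (u t) ^ 2)
      ((-(2 * a t₀) * s2 t₀ - 1) * (u t₀)^2 + s2 t₀ * ((2:ℕ) * (u t₀)^1 * (a t₀ * u t₀ + h t₀ (u t₀)))) t₀ :=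
    (hs2deriv t₀).mul ((hu t₀).pow 2)
  have hDeq : D = -(u₀^2) + 2 * s2 t₀ * u₀ * h t₀ u₀ := by
    rw [hD.unique hSderiv, hut₀]
    push_cast
    ring
  -- bound h term
  have hnb : n |u₀| < 1/(4*M) := by
    have := hδ₀ (x := |u₀|) (by rw [Real.dist_eq]; rw [sub_zero, abs_abs]; linarith)
    rw [Real.dist_eq, hn0, sub_zero] at this
    exact lt_of_le_of_lt (le_abs_self _) this
  have hhb : |h t₀ u₀| ≤ (1/(4*M)) * |u₀| := by
    calc |h t₀ u₀| ≤ n |u₀| * |u₀| := hhn t₀ u₀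
      _ ≤ (1/(4*M)) * |u₀| := by nlinarith
  have hterm : 2 * s2 t₀ * u₀ * h t₀ u₀ ≤ u₀^2 / 2 := by
    have h1 : 2 * s2 t₀ * u₀ * h t₀ u₀ ≤ |2 * s2 t₀ * u₀ * h t₀ u₀| := le_abs_self _
    have h2 : |2 * s2 t₀ * u₀ * h t₀ u₀| = 2 * s2 t₀ * |u₀| * |h t₀ u₀| := by
      rw [abs_mul, abs_mul, abs_mul]
      rw [abs_of_nonneg (by norm_num : (0:ℝ) ≤ 2), abs_of_nonneg (hs2nonneg t₀)]
    have h3 : 2 * s2 t₀ * |u₀| * |h t₀ u₀| ≤ 2 * M * |u₀| * ((1/(4*M)) * |u₀|) := by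
      have e1 : 2 * s2 t₀ * |u₀| * |h t₀ u₀| ≤ 2 * s2 t₀ * |u₀| * ((1/(4*M)) * |u₀|) :=
        mul_le_mul_of_nonneg_left hhb
          (mul_nonneg (mul_nonneg (by norm_num) (hs2nonneg t₀)) (abs_nonneg _))
      have e2 : 2 * s2 t₀ * |u₀| * ((1/(4*M)) * |u₀|) ≤ 2 * M * |u₀| * ((1/(4*M)) * |u₀|) := by
        have := hs2bd t₀ ht₀
        have hc : 0 ≤ (1/(4*M)) * |u₀| := by positivity
        have := mul_le_mul_of_nonneg_right
          (mul_le_mul_of_nonneg_right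
            (mul_le_mul_of_nonneg_left this (by norm_num : (0:ℝ) ≤ 2)) (abs_nonneg u₀)) hc
        linarith
      linarith
    have h4 : 2 * M * |u₀| * ((1/(4*M)) * |u₀|) = u₀^2 / 2 := by
      field_simp
      rw [← sq_abs u₀]
      ring
    linarith
  rw [hDeq]
  linarith
end
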